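/- Let q ∈ {−1, 1}, θ > 0, p ∈ ℝ² \ {0}, v_i, v_j ∈ ℝ², and define h₁ = 2 p^T (v_i − v_j) + α and h₂(q) = 2 p^T R(qθ) v_i − 2 p^T v_j + α + 4‖p‖‖v_i‖ sin(θ), where α ∈ ℝ. If 0 < θ < π/2, then h₁ ≤ h₂(q) for both values of q. -/

import Mathlib

open Real Matrix

/-- Counterclockwise rotation matrix by angle `θ`. -/
noncomputable def Rot (θ : ℝ) : Matrix (Fin 2) (Fin 2) ℝ :=
  !![Real.cos θ, -Real.sin θ; Real.sin θ, Real.cos θ]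

lemma key (c s : ℝ) (hc : 0 ≤ c) (hs : 0 < s) (h1 : c^2 + s^2 = 1)
    (a b x y P V : ℝ) (hP : P^2 = a^2 + b^2) (hV : V^2 = x^2 + y^2)
    (hP0 : 0 ≤ P) (hV0 : 0 ≤ V) (ε : ℝ) (hε : ε = 1 ∨ ε = -1) :
    (1 - c) * (a*x + b*y) + ε * s * (a*y - b*x) ≤ 2 * P * V * s := by
  have hid : (a*x + b*y)^2 + (a*y - b*x)^2 = P^2 * V^2 := by
    rw [hP, hV]; ring
  have h2 : |a*x + b*y| ≤ P * V := by
    rw [abs_le]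
    constructor <;> nlinarith [sq_nonneg (a*y - b*x), mul_nonneg hP0 hV0]
  have h3 : |a*y - b*x| ≤ P * V := by
    rw [abs_le]
    constructor <;> nlinarith [sq_nonneg (a*x + b*y), mul_nonneg hP0 hV0]
  have hcs : 1 - c ≤ s := by nlinarith
  have hc1 : c ≤ 1 := by nlinarith
  have habs1 := abs_le.mp h2
  have habs2 := abs_le.mp h3
  rcases hε with rfl | rfl <;> nlinarith [mul_nonneg hP0 hV0]

/-- The synergistic CBF `h₂(q)` upper-bounds the nonhybrid candidate `h₁` for both values
of the discrete variable `q ∈ {−1, 1}` when `0 < θ < π/2`. -/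
theorem h1_le_h2 (q : ℝ) (hq : q = 1 ∨ q = -1) (θ : ℝ) (hθ : 0 < θ) (hθ' : θ < π / 2)
    (p vi vj : EuclideanSpace ℝ (Fin 2)) (hp : p ≠ 0) (α : ℝ) :
    2 * ((fun i => p i) ⬝ᵥ fun i => (vi - vj) i) + α ≤
      2 * ((fun i => p i) ⬝ᵥ (Rot (q * θ) *ᵥ fun i => vi i)) -
        2 * ((fun i => p i) ⬝ᵥ fun i => vj i) + α + 4 * ‖p‖ * ‖vi‖ * Real.sin θ := by
  have hs : 0 < Real.sin θ := Real.sin_pos_of_pos_of_lt_pi hθ (by linarith [Real.pi_gt_three])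
  have hc : 0 ≤ Real.cos θ := Real.cos_nonneg_of_mem_Icc ⟨by linarith, le_of_lt hθ'⟩
  have hP : ‖p‖^2 = (p 0)^2 + (p 1)^2 := by
    rw [EuclideanSpace.norm_eq]
    rw [Real.sq_sqrt (by positivity)]
    simp [Fin.sum_univ_two, sq_abs]
  have hV : ‖vi‖^2 = (vi 0)^2 + (vi 1)^2 := by
    rw [EuclideanSpace.norm_eq]
    rw [Real.sq_sqrt (by positivity)]
    simp [Fin.sum_univ_two, sq_abs]
  have hcq : Real.cos (q * θ) = Real.cos θ := by
    rcases hq with rfl | rfl <;> simp [neg_mul, Real.cos_neg]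
  have hsq : ∃ ε : ℝ, (ε = 1 ∨ ε = -1) ∧ Real.sin (q * θ) = ε * Real.sin θ := by
    rcases hq with rfl | rfl
    · exact ⟨1, Or.inl rfl, by simp⟩
    · exact ⟨-1, Or.inr rfl, by simp [neg_mul, Real.sin_neg]⟩
  obtain ⟨ε, hε, hsin⟩ := hsq
  have hkey := key (Real.cos θ) (Real.sin θ) hc hs
    (by rw [← Real.sin_sq_add_cos_sq θ]; ring) (p 0) (p 1) (vi 0) (vi 1) ‖p‖ ‖vi‖
    hP hV (norm_nonneg p) (norm_nonneg vi) ε hε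
  simp only [Rot, dotProduct, Fin.sum_univ_two, Matrix.mulVec, Matrix.cons_val_zero,
    Matrix.cons_val_one, Matrix.head_cons, Matrix.cons_dotProduct, Matrix.vecHead,
    Matrix.vecTail, Function.comp, PiLp.sub_apply, hcq, hsin, Matrix.dotProduct_of_isEmpty,
    Matrix.empty_mulVec, Fin.succ_zero_eq_one, Matrix.cons_val', Matrix.empty_val', Matrix.cons_val_fin_one, Matrix.of_apply]
  ring_nf
  ring_nf at hkey
  nlinarith [hkey]
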